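/- Let n ≥ 8 and let A be an extremal n×n 0-1 matrix (zero trace, A² a 0-1 matrix, with ⌊(n²+4n)/4⌋ − 1 ones) whose maximum row sum Δ⁺ is at least its maximum column sum Δ⁻. Then Δ⁺ = ⌈(n+1)/2⌉. -/

import Mathlib

namespace Stmt9aux

open Finset

variable {N : ℕ}

/-- row sums -/
def rsum (A : Matrix (Fin N) (Fin N) ℤ) (i : Fin N) : ℤ := ∑ j, A i j

/-- column sums -/
def csum (A : Matrix (Fin N) (Fin N) ℤ) (j : Fin N) : ℤ := ∑ i, A i j

lemma csum_eq_rsum_transpose (A : Matrix (Fin N) (Fin N) ℤ) (j : Fin N) :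
    csum A j = rsum A.transpose j := by
  simp [csum, rsum, Matrix.transpose_apply]

lemma sum_eq_one_extract {s : Finset (Fin N)} {f : Fin N → ℤ}
    (h01 : ∀ i ∈ s, f i = 0 ∨ f i = 1) (hs : ∑ i ∈ s, f i = 1) :
    ∃ z ∈ s, f z = 1 ∧ ∀ k ∈ s, k ≠ z → f k = 0 := by
  have hex : ∃ z ∈ s, f z = 1 := by
    by_contra hc; push_neg at hc
    have h0 : ∀ j ∈ s, f j = 0 := fun j hj => (h01 j hj).resolve_right (hc j hj)
    rw [Finset.sum_eq_zero h0] at hs; norm_num at hs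
  obtain ⟨z, hzs, hz⟩ := hex
  refine ⟨z, hzs, hz, ?_⟩
  have h0 : ∑ k ∈ s.erase z, f k = 0 := by
    have h := Finset.sum_erase_add s f hzs
    linarith
  intro k hk hkz
  have hnn : ∀ j ∈ s.erase z, 0 ≤ f j := fun j hj => by
    rcases h01 j (Finset.mem_of_mem_erase hj) with h | h <;> omega
  exact (Finset.sum_eq_zero_iff_of_nonneg hnn).1 h0 k (Finset.mem_erase.2 ⟨hkz, hk⟩)

lemma exists_eq_one {f : Fin N → ℤ} (h01 : ∀ i, f i = 0 ∨ f i = 1)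
    (hs : 1 ≤ ∑ i, f i) : ∃ i, f i = 1 := by
  by_contra hc; push_neg at hc
  have h0 : ∀ j ∈ Finset.univ, f j = 0 := fun j _ => (h01 j).resolve_right (hc j)
  rw [Finset.sum_eq_zero h0] at hs; norm_num at hs

lemma sum_le_one_of_uniq {f : Fin N → ℤ} (h01 : ∀ i, f i = 0 ∨ f i = 1)
    (huniq : ∀ i j, f i = 1 → f j = 1 → i = j) : ∑ i, f i ≤ 1 := by
  by_cases hex : ∃ i, f i = 1
  · obtain ⟨i, hi⟩ := hex
    have h0 : ∀ j ∈ Finset.univ.erase i, f j = 0 := by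
      intro j hj
      rcases h01 j with h | h
      · exact h
      · exact absurd (huniq j i h hi) (Finset.ne_of_mem_erase hj)
    have := Finset.sum_erase_add Finset.univ f (Finset.mem_univ i)
    rw [← this, Finset.sum_eq_zero h0, hi]
    norm_num
  · push_neg at hex
    have h0 : ∀ j ∈ Finset.univ, f j = 0 := fun j _ => (h01 j).resolve_right (hex j)
    rw [Finset.sum_eq_zero h0]; norm_num

section core

variable (A : Matrix (Fin N) (Fin N) ℤ)

lemma entry_nonneg (hA : ∀ i j, A i j = 0 ∨ A i j = 1) (i j : Fin N) : 0 ≤ A i j := by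
  rcases hA i j with h | h <;> omega

lemma entry_le_one (hA : ∀ i j, A i j = 0 ∨ A i j = 1) (i j : Fin N) : A i j ≤ 1 := by
  rcases hA i j with h | h <;> omega

lemma rsum_nonneg (hA : ∀ i j, A i j = 0 ∨ A i j = 1) (i : Fin N) : 0 ≤ rsum A i :=
  Finset.sum_nonneg fun j _ => entry_nonneg A hA i j

/-- the double sum equals the sum of row sums -/
lemma total_eq_sum_rsum : ∑ i, ∑ j, A i j = ∑ i, rsum A i := rfl

/-- W identity : ∑_k A u k * rsum A k = row sum of A² at u -/
lemma W_eq (u : Fin N) : ∑ k, A u k * rsum A k = ∑ j, (A * A) u j := by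
  simp only [Matrix.mul_apply, rsum, Finset.mul_sum]
  rw [Finset.sum_comm]

/-- row sums of A² are at most N -/
lemma W_le (hA2 : ∀ i j, (A * A) i j = 0 ∨ (A * A) i j = 1) (u : Fin N) :
    ∑ k, A u k * rsum A k ≤ (N : ℤ) := by
  rw [W_eq]
  calc ∑ j, (A * A) u j ≤ ∑ _j : Fin N, (1 : ℤ) := by
        apply Finset.sum_le_sum
        intro j _
        rcases hA2 u j with h | h <;> omega
    _ = (N : ℤ) := by simp

lemma sq_nonneg' (hA : ∀ i j, A i j = 0 ∨ A i j = 1) (i j : Fin N) : 0 ≤ (A * A) i j := by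
  rw [Matrix.mul_apply]
  exact Finset.sum_nonneg fun k _ => mul_nonneg (entry_nonneg A hA i k) (entry_nonneg A hA k j)

/-- ∑_k rsum k * csum k = total sum of A² -/
lemma sum_rc_eq : ∑ k, rsum A k * csum A k = ∑ i, ∑ j, (A * A) i j := by
  have h1 : ∀ k, rsum A k * csum A k = ∑ i, ∑ j, A i k * A k j := by
    intro k
    rw [rsum, csum, Finset.sum_mul_sum]
    rw [Finset.sum_comm]
    congr 1; ext i; congr 1; ext j; ring
  calc ∑ k, rsum A k * csum A k = ∑ k, ∑ i, ∑ j, A i k * A k j := by simp only [h1]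
    _ = ∑ i, ∑ k, ∑ j, A i k * A k j := Finset.sum_comm
    _ = ∑ i, ∑ j, ∑ k, A i k * A k j := Finset.sum_congr rfl fun i _ => Finset.sum_comm
    _ = ∑ i, ∑ j, (A * A) i j := by simp only [Matrix.mul_apply]

lemma sum_rc_le_sq (hA2 : ∀ i j, (A * A) i j = 0 ∨ (A * A) i j = 1) :
    ∑ k, rsum A k * csum A k ≤ (N : ℤ)^2 := by
  rw [sum_rc_eq]
  calc ∑ i, ∑ j, (A * A) i j ≤ ∑ _i : Fin N, ∑ _j : Fin N, (1:ℤ) := by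
        apply Finset.sum_le_sum; intro i _
        apply Finset.sum_le_sum; intro j _
        rcases hA2 i j with h | h <;> omega
    _ = (N:ℤ)^2 := by simp; ring

lemma sum_rc_ge (d e : ℤ) (hrle : ∀ i, rsum A i ≤ d) (hcle : ∀ j, csum A j ≤ e)
    (m : ℤ) (hm : ∑ i, ∑ j, A i j = m) :
    m * (d + e) - (N:ℤ) * d * e ≤ ∑ k, rsum A k * csum A k := by
  have key : (0:ℤ) ≤ ∑ k, (d - rsum A k) * (e - csum A k) := by
    apply Finset.sum_nonneg
    intro k _
    have h1 := hrle k; have h2 := hcle k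
    nlinarith
  have hr : ∑ k, rsum A k = m := by rw [← hm]; rfl
  have hc : ∑ k, csum A k = m := by
    rw [← hm]; exact Finset.sum_comm
  have expand : ∑ k, (d - rsum A k) * (e - csum A k)
      = (N:ℤ)*d*e - e * (∑ k, rsum A k) - d * (∑ k, csum A k)
        + ∑ k, rsum A k * csum A k := by
    have hpt : ∀ k ∈ Finset.univ, (d - rsum A k) * (e - csum A k) =
        d*e - e * rsum A k - d * csum A k + rsum A k * csum A k := fun k _ => by ring
    rw [Finset.sum_congr rfl hpt]
    rw [Finset.sum_add_distrib, Finset.sum_sub_distrib, Finset.sum_sub_distrib,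
      ← Finset.mul_sum, ← Finset.mul_sum]
    simp [Finset.sum_const, Finset.card_univ, ← Finset.mul_sum]
    ring
  rw [hr, hc] at expand
  linarith [key, expand.symm.le, expand.le]

/-- the degree bound:  total ≤ N + (N - d) d, given max row sum d attained -/
lemma sumBound (hA : ∀ i j, A i j = 0 ∨ A i j = 1)
    (hA2 : ∀ i j, (A * A) i j = 0 ∨ (A * A) i j = 1)
    (d : ℤ) (hrle : ∀ i, rsum A i ≤ d) (v : Fin N) (hv : rsum A v = d) :
    ∑ i, ∑ j, A i j ≤ (N:ℤ) + ((N:ℤ) - d) * d := by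
  have hsplit : ∑ i, ∑ j, A i j
      = ∑ k, A v k * rsum A k + ∑ k, (1 - A v k) * rsum A k := by
    rw [total_eq_sum_rsum, ← Finset.sum_add_distrib]
    congr 1; ext k; ring
  have h1 : ∑ k, A v k * rsum A k ≤ (N:ℤ) := W_le A hA2 v
  have h2 : ∑ k, (1 - A v k) * rsum A k ≤ ((N:ℤ) - d) * d := by
    calc ∑ k, (1 - A v k) * rsum A k ≤ ∑ k, (1 - A v k) * d := by
          apply Finset.sum_le_sum
          intro k _
          have := entry_le_one A hA v k
          have := hrle k
          nlinarith
      _ = ((N:ℤ) - d) * d := by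
          rw [← Finset.sum_mul]
          congr 1
          rw [Finset.sum_sub_distrib]
          simp [rsum] at hv ⊢
          rw [hv]
    
  linarith [hsplit]

end core

section nine

lemma nineHard (A : Matrix (Fin 9) (Fin 9) ℤ)
    (hA : ∀ i j, A i j = 0 ∨ A i j = 1)
    (hA2 : ∀ i j, (A * A) i j = 0 ∨ (A * A) i j = 1)
    (hsum : ∑ i, ∑ j, A i j = 28)
    (hrle : ∀ i, rsum A i ≤ 4) (hcle : ∀ j, csum A j ≤ 4)
    (hv : ∃ v, rsum A v = 4) : False := by
  obtain ⟨v, hvv⟩ := hv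
  set Z : Fin 9 → ℤ := fun k => ∑ j, (1 - (A * A) k j) with hZ
  have hZnn : ∀ k, 0 ≤ Z k := by
    intro k
    apply Finset.sum_nonneg
    intro j _
    rcases hA2 k j with h | h <;> omega
  have hZtot : ∑ k, Z k = 81 - ∑ i, ∑ j, (A * A) i j := by
    simp only [hZ, Finset.sum_sub_distrib]
    simp
  have hS : (80:ℤ) ≤ ∑ i, ∑ j, (A * A) i j := by
    have h1 := sum_rc_ge A 4 4 hrle hcle 28 hsum
    rw [sum_rc_eq] at h1
    norm_num at h1
    linarith
  have hZ1 : ∑ k, Z k ≤ 1 := by omega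
  have hZk : ∀ k, Z k ≤ 1 := by
    intro k
    have : ∑ l, Z l = Z k + ∑ l ∈ Finset.univ.erase k, Z l := by
      rw [add_comm, Finset.sum_erase_add _ _ (Finset.mem_univ k)]
    have hnn : 0 ≤ ∑ l ∈ Finset.univ.erase k, Z l :=
      Finset.sum_nonneg fun l _ => hZnn l
    linarith
  have hWeq : ∀ k, ∑ l, A k l * rsum A l = 9 - Z k := by
    intro k
    rw [W_eq]
    simp only [hZ, Finset.sum_sub_distrib]
    simp
  have hr3 : ∀ k, 3 - Z k ≤ rsum A k := by
    intro k
    have h1 : ∑ l, A k l * rsum A l ≤ 4 * rsum A k := by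
      calc ∑ l, A k l * rsum A l ≤ ∑ l, A k l * 4 := by
            apply Finset.sum_le_sum
            intro l _
            have := entry_nonneg A hA k l
            have := hrle l
            nlinarith
        _ = 4 * rsum A k := by rw [← Finset.sum_mul, rsum]; ring
    have h2 := hWeq k
    have h3 := hZk k
    have h4 := hZnn k
    omega
  have hlow : (11:ℤ) ≤ ∑ l, A v l * rsum A l := by
    have h1 : ∑ l, A v l * (3 - Z l) ≤ ∑ l, A v l * rsum A l := by
      apply Finset.sum_le_sum
      intro l _
      have := entry_nonneg A hA v l
      have := hr3 l
      nlinarith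
    have h2 : ∑ l, A v l * (3 - Z l) = 3 * rsum A v - ∑ l, A v l * Z l := by
      have hpt : ∀ l ∈ Finset.univ, A v l * (3 - Z l) = 3 * A v l - A v l * Z l :=
        fun l _ => by ring
      rw [Finset.sum_congr rfl hpt, Finset.sum_sub_distrib, ← Finset.mul_sum, rsum]
    have h3 : ∑ l, A v l * Z l ≤ ∑ l, Z l := by
      apply Finset.sum_le_sum
      intro l _
      have := entry_le_one A hA v l
      have := hZnn l
      nlinarith
    rw [hvv] at h2
    linarith
  have hup := W_le A hA2 v
  norm_num at hup
  linarith

end nine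
section arith
lemma evenWindow (h d : ℤ) (h4 : 4 ≤ h) (hw : h^2+2*h-1 ≤ 2*h + (2*h-d)*d) :
    h-1 ≤ d ∧ d ≤ h+1 := by
  constructor <;> nlinarith [sq_nonneg (d - h)]
lemma oddWindow (t d : ℤ) (h4 : 4 ≤ t) (hw : t^2+3*t ≤ (2*t+1) + (2*t+1-d)*d) :
    t ≤ d ∧ d ≤ t+1 := by
  constructor
  · by_contra hcon
    push_neg at hcon
    have h1 : d ≤ t - 1 := by omega
    nlinarith
  · by_contra hcon
    push_neg at hcon
    have h1 : t + 2 ≤ d := by omega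
    nlinarith
lemma killPoly1 (h : ℤ) (h4 : 4 ≤ h)
    (hp : (h^2+2*h-1)*(h+(h-1)) - (2*h)*h*(h-1) ≤ (2*h)^2) : False := by nlinarith
lemma killPoly2 (t : ℤ) (h5 : 5 ≤ t)
    (hp : (t^2+3*t)*(t+t) - (2*t+1)*t*t ≤ (2*t+1)^2) : False := by nlinarith
end arith

section evenprep

variable {N : ℕ}

/-- indicator of rows with sum `h` -/
def iP (h : ℤ) (A : Matrix (Fin N) (Fin N) ℤ) (k : Fin N) : ℤ := if rsum A k = h then 1 else 0
/-- indicator of rows with sum `h-1` -/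
def iW (h : ℤ) (A : Matrix (Fin N) (Fin N) ℤ) (k : Fin N) : ℤ := if rsum A k = h - 1 then 1 else 0
/-- indicator of rows with sum `≤ h-2` -/
def iD (h : ℤ) (A : Matrix (Fin N) (Fin N) ℤ) (k : Fin N) : ℤ := if rsum A k ≤ h - 2 then 1 else 0

/-- hypothesis bundle for the hard even case -/
structure GM (h : ℤ) (A : Matrix (Fin N) (Fin N) ℤ) : Prop where
  hN : (N:ℤ) = 2*h
  h4 : 4 ≤ h
  hA : ∀ i j, A i j = 0 ∨ A i j = 1
  htr : ∀ i, A i i = 0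
  hA2 : ∀ i j, (A * A) i j = 0 ∨ (A * A) i j = 1
  hsum : ∑ i, ∑ j, A i j = h^2 + 2*h - 1
  hrle : ∀ i, rsum A i ≤ h
  hcle : ∀ j, csum A j ≤ h
  hrex : ∃ v, rsum A v = h
  hcex : ∃ w, csum A w = h

variable (h : ℤ) (A : Matrix (Fin N) (Fin N) ℤ)

lemma GM.transpose (G : GM h A) : GM h A.transpose := by
  obtain ⟨hN, h4, hA, htr, hA2, hsum, hrle, hcle, hrex, hcex⟩ := G
  have hsqT : A.transpose * A.transpose = (A * A).transpose := (Matrix.transpose_mul A A).symm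
  refine ⟨hN, h4, fun i j => hA j i, fun i => htr i, ?_, ?_, ?_, ?_, ?_, ?_⟩
  · intro i j; rw [hsqT]; exact hA2 j i
  · simp only [Matrix.transpose_apply]; rw [Finset.sum_comm]
    exact hsum
  · intro i; rw [← csum_eq_rsum_transpose]; exact hcle i
  · intro j
    have : csum A.transpose j = rsum A j := by
      simp [csum, rsum, Matrix.transpose_apply]
    rw [this]; exact hrle j
  · obtain ⟨w, hw⟩ := hcex
    exact ⟨w, by rw [← csum_eq_rsum_transpose]; exact hw⟩
  · obtain ⟨v, hv⟩ := hrex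
    refine ⟨v, ?_⟩
    have : csum A.transpose v = rsum A v := by
      simp [csum, rsum, Matrix.transpose_apply]
    rw [this]; exact hv


lemma iP01 (k : Fin N) : iP h A k = 0 ∨ iP h A k = 1 := by unfold iP; split_ifs <;> simp
lemma iW01 (k : Fin N) : iW h A k = 0 ∨ iW h A k = 1 := by unfold iW; split_ifs <;> simp
lemma iP_bd (k : Fin N) : 0 ≤ iP h A k ∧ iP h A k ≤ 1 := by unfold iP; split_ifs <;> norm_num
lemma iW_bd (k : Fin N) : 0 ≤ iW h A k ∧ iW h A k ≤ 1 := by unfold iW; split_ifs <;> norm_num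
lemma iD_bd (k : Fin N) : 0 ≤ iD h A k ∧ iD h A k ≤ 1 := by unfold iD; split_ifs <;> norm_num
lemma iD01 (k : Fin N) : iD h A k = 0 ∨ iD h A k = 1 := by unfold iD; split_ifs <;> simp

lemma iP_eq_one (k : Fin N) (hk : rsum A k = h) : iP h A k = 1 := by simp [iP, hk]

lemma rsum_of_iP {k : Fin N} (hk : iP h A k = 1) : rsum A k = h := by
  by_contra hc; simp [iP, hc] at hk

lemma rsum_of_iW {k : Fin N} (hk : iW h A k = 1) : rsum A k = h - 1 := by
  by_contra hc; simp [iW, hc] at hk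

lemma rsum_of_iD {k : Fin N} (hk : iD h A k = 1) : rsum A k ≤ h - 2 := by
  by_contra hc; simp [iD, hc] at hk

variable (G : GM h A)
include G

lemma class_sum (k : Fin N) :
    iP h A k + iW h A k + iD h A k = 1 := by
  have := G.hrle k
  unfold iP iW iD
  split_ifs <;> omega


/-- total row deficit -/
lemma deficit_total : ∑ k, (h - rsum A k) = (h-1)^2 := by
  rw [Finset.sum_sub_distrib]
  have h1 : ∑ k : Fin N, rsum A k = h^2 + 2*h - 1 := G.hsum
  rw [h1]
  simp [Finset.sum_const, Finset.card_univ]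
  rw [G.hN]; ring

/-- pointwise deficit identity -/
lemma deficit_pointwise (k : Fin N) :
    h - rsum A k = iW h A k + iD h A k * (h - rsum A k) := by
  have := G.hrle k
  unfold iW iD
  split_ifs <;> omega

/-- deficit carried by D₂ -/
lemma deficit_D : ∑ k, iD h A k * (h - rsum A k) = (h-1)^2 - ∑ k, iW h A k := by
  have h1 := deficit_total h A G
  calc ∑ k, iD h A k * (h - rsum A k)
      = ∑ k, ((h - rsum A k) - iW h A k) := by
        apply Finset.sum_congr rfl
        intro k _
        have := deficit_pointwise h A G k
        omega
    _ = (h-1)^2 - ∑ k, iW h A k := by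
        rw [Finset.sum_sub_distrib, h1]

/-- every max row points to every D₂ vertex -/
lemma S2 (u : Fin N) (hu : rsum A u = h) (k : Fin N) (hk : rsum A k ≤ h - 2) :
    A u k = 1 := by
  have hW : ∑ l, A u l * rsum A l ≤ 2*h := by
    have := W_le A G.hA2 u; rw [G.hN] at this; exact this
  have hkey : ∑ l, (1 - A u l) * (h - rsum A l) ≤ 1 := by
    have e1 : ∑ l, (1 - A u l) * (h - rsum A l)
        = h * ((N:ℤ) - h) - (∑ l, rsum A l) + ∑ l, A u l * rsum A l := by
      have hpt : ∀ l ∈ Finset.univ, (1 - A u l) * (h - rsum A l)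
          = (h - h * A u l) - rsum A l + A u l * rsum A l := fun l _ => by ring
      rw [Finset.sum_congr rfl hpt]
      rw [Finset.sum_add_distrib, Finset.sum_sub_distrib, Finset.sum_sub_distrib,
        ← Finset.mul_sum]
      have hru : ∑ l : Fin N, A u l = h := hu
      rw [hru]
      simp [Finset.sum_const, Finset.card_univ]
      ring
    have e2 : ∑ l : Fin N, rsum A l = h^2 + 2*h - 1 := G.hsum
    rw [e1, e2, G.hN]
    linarith
  by_contra hc
  have hc0 : A u k = 0 := (G.hA u k).resolve_right hc
  have hterm : (2:ℤ) ≤ (1 - A u k) * (h - rsum A k) := by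
    rw [hc0]; omega
  have hnn : ∀ l ∈ Finset.univ, 0 ≤ (1 - A u l) * (h - rsum A l) := by
    intro l _
    have := entry_le_one A G.hA u l
    have := G.hrle l
    nlinarith
  have := Finset.single_le_sum hnn (Finset.mem_univ k)
  linarith

/-- there is a D₂ vertex -/
lemma S3 : ∃ k₀, rsum A k₀ ≤ h - 2 := by
  by_contra hc
  push_neg at hc
  have h1 : ∑ k, (h - rsum A k) ≤ ∑ _k : Fin N, (1:ℤ) := by
    apply Finset.sum_le_sum
    intro k _
    have := hc k; have := G.hrle k; omega
  rw [deficit_total h A G] at h1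
  simp [Finset.sum_const, Finset.card_univ] at h1
  rw [G.hN] at h1
  have := G.h4
  nlinarith

/-- every vertex has at most one out-arc into P -/
lemma S4 (j : Fin N) : ∑ u, iP h A u * A j u ≤ 1 := by
  obtain ⟨k₀, hk₀⟩ := S3 h A G
  apply sum_le_one_of_uniq
  · intro u
    rcases iP01 h A u with h1 | h1 <;> rcases G.hA j u with h2 | h2 <;>
      simp [h1, h2]
  · intro u₁ u₂ h1 h2
    by_contra hne
    have f1 : iP h A u₁ = 1 ∧ A j u₁ = 1 := by
      rcases iP01 h A u₁ with hh | hh <;> rcases G.hA j u₁ with hh2 | hh2 <;>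
        simp [hh, hh2] at h1 ⊢
    have f2 : iP h A u₂ = 1 ∧ A j u₂ = 1 := by
      rcases iP01 h A u₂ with hh | hh <;> rcases G.hA j u₂ with hh2 | hh2 <;>
        simp [hh, hh2] at h2 ⊢
    have g1 : A u₁ k₀ = 1 := S2 h A G u₁ (rsum_of_iP h A f1.1) k₀ hk₀
    have g2 : A u₂ k₀ = 1 := S2 h A G u₂ (rsum_of_iP h A f2.1) k₀ hk₀
    have hpair : ∑ l ∈ ({u₁, u₂} : Finset (Fin N)), A j l * A l k₀ = 2 := by
      rw [Finset.sum_pair hne, f1.2, f2.2, g1, g2]; ring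
    have hle : ∑ l ∈ ({u₁, u₂} : Finset (Fin N)), A j l * A l k₀ ≤ ∑ l, A j l * A l k₀ := by
      apply Finset.sum_le_sum_of_subset_of_nonneg (Finset.subset_univ _)
      intro l _ _
      exact mul_nonneg (entry_nonneg A G.hA j l) (entry_nonneg A G.hA l k₀)
    have hsq : ∑ l, A j l * A l k₀ ≤ 1 := by
      have hq := G.hA2 j k₀
      rw [Matrix.mul_apply] at hq
      rcases hq with hh | hh <;> omega
    linarith

/-- p ≤ h -/
lemma S5 : ∑ i, iP h A i ≤ h := by
  obtain ⟨k₀, hk₀⟩ := S3 h A G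
  have h1 : ∑ i, iP h A i ≤ ∑ i, A i k₀ := by
    apply Finset.sum_le_sum
    intro i _
    rcases iP01 h A i with hh | hh
    · rw [hh]; exact entry_nonneg A G.hA i k₀
    · rw [hh, S2 h A G i (rsum_of_iP h A hh) k₀ hk₀]
  exact le_trans h1 (G.hcle k₀)

end evenprep

section evenstruct

variable {N : ℕ} (h : ℤ) (A : Matrix (Fin N) (Fin N) ℤ) (G : GM h A)
include G

/-- structural facts about the out-neighbourhood of a max row -/
lemma S6data (u : Fin N) (hu : rsum A u = h) :
    (∑ k, iP h A k * A u k) + (∑ k, iW h A k * A u k) + (∑ k, iD h A k) = h ∧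
    (∑ k, iW h A k) - 1 ≤ ∑ k, iW h A k * A u k ∧
    ∑ k, A u k * rsum A k
      = h^2 - (∑ k, iW h A k * A u k) - ((h-1)^2 - ∑ k, iW h A k) := by
  have hD1 : ∀ k, iD h A k * A u k = iD h A k := by
    intro k
    rcases iD01 h A k with hh | hh
    · rw [hh]; ring
    · rw [hh, S2 h A G u hu k (rsum_of_iD h A hh)]
      norm_num
  have part1 : (∑ k, iP h A k * A u k) + (∑ k, iW h A k * A u k) + (∑ k, iD h A k) = h := by
    have e1 : ∀ k ∈ Finset.univ,
        A u k = iP h A k * A u k + iW h A k * A u k + iD h A k := by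
      intro k _
      have h₁ := class_sum h A G k
      have h₂ := hD1 k
      linear_combination (-(A u k)) * h₁ + h₂
    calc (∑ k, iP h A k * A u k) + (∑ k, iW h A k * A u k) + (∑ k, iD h A k)
        = ∑ k, (iP h A k * A u k + iW h A k * A u k + iD h A k) := by
          rw [Finset.sum_add_distrib, Finset.sum_add_distrib]
      _ = ∑ k, A u k := Finset.sum_congr rfl (fun k hk => (e1 k hk).symm)
      _ = h := hu
  have part3 : ∑ k, A u k * rsum A k
      = h^2 - (∑ k, iW h A k * A u k) - ((h-1)^2 - ∑ k, iW h A k) := by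
    have e1 : ∀ k ∈ Finset.univ, A u k * rsum A k
        = h * A u k - (iW h A k * A u k + iD h A k * (h - rsum A k)) := by
      intro k _
      have hcs := class_sum h A G k
      have hD := hD1 k
      -- A u k * (h - rsum A k) = iW k * A u k + iD k * (h - rsum A k)
      obtain ⟨bp1, bp2⟩ := iP_bd h A k
      obtain ⟨bw1, bw2⟩ := iW_bd h A k
      obtain ⟨bd1, bd2⟩ := iD_bd h A k
      have key : A u k * (h - rsum A k) = iW h A k * A u k + iD h A k * (h - rsum A k) := by
        rcases iD01 h A k with hd | hd
        · -- not in D₂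
          rcases iW01 h A k with hw | hw
          · -- in P : deficit 0
            have hp : iP h A k = 1 := by omega
            have : rsum A k = h := rsum_of_iP h A hp
            rw [hd, hw, this]; ring
          · have : rsum A k = h - 1 := rsum_of_iW h A hw
            rw [hd, hw, this]; ring
        · have hAu : A u k = 1 := by
            have := hD1 k; rw [hd] at this; linarith
          have hw : iW h A k = 0 := by omega
          rw [hd, hw, hAu]; ring
      linear_combination -key
    rw [Finset.sum_congr rfl e1, Finset.sum_sub_distrib, ← Finset.mul_sum]
    have e2 : ∑ k, A u k = h := hu
    rw [e2, Finset.sum_add_distrib, deficit_D h A G]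
    ring
  have part2 : (∑ k, iW h A k) - 1 ≤ ∑ k, iW h A k * A u k := by
    have hW : ∑ k, A u k * rsum A k ≤ 2*h := by
      have := W_le A G.hA2 u; rw [G.hN] at this; exact this
    rw [part3] at hW
    nlinarith [G.h4]
  exact ⟨part1, part2, part3⟩

/-- p ∈ {h-1, h} -/
lemma S6 : (∑ i, iP h A i) = h ∨ (∑ i, iP h A i) = h - 1 := by
  obtain ⟨v, hv⟩ := G.hrex
  obtain ⟨part1, part2, _⟩ := S6data h A G v hv
  have hp_le : ∑ i, iP h A i ≤ h := S5 h A G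
  have hclasses : (∑ i, iP h A i) + (∑ k, iW h A k) + (∑ k, iD h A k) = 2*h := by
    have e1 : ∀ k ∈ Finset.univ, (1:ℤ) = iP h A k + iW h A k + iD h A k :=
      fun k _ => (class_sum h A G k).symm
    have e2 : ∑ _k : Fin N, (1:ℤ) = 2*h := by
      simp [Finset.sum_const, Finset.card_univ]; rw [G.hN]
    rw [← Finset.sum_add_distrib, ← Finset.sum_add_distrib, ← Finset.sum_congr rfl e1, e2]
  have he0 : 0 ≤ ∑ k, iP h A k * A v k := by
    apply Finset.sum_nonneg
    intro k _
    rcases iP01 h A k with hh | hh <;> rcases G.hA v k with h2 | h2 <;> simp [hh, h2]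
  have he1 : ∑ k, iP h A k * A v k ≤ 1 := S4 h A G v
  have hs_le : ∑ k, iW h A k * A v k ≤ ∑ k, iW h A k := by
    apply Finset.sum_le_sum
    intro k _
    rcases iW01 h A k with hh | hh <;> rcases G.hA v k with h2 | h2 <;> simp [hh, h2]
  omega

/-- full coverage and no arcs inside P, when p = h - 1 -/
lemma covP (hp : ∑ i, iP h A i = h - 1) (u : Fin N) (hu : rsum A u = h) :
    (∀ j, (A * A) u j = 1) ∧ (∀ k, rsum A k = h → A u k = 0) ∧
    (∑ k, iW h A k * A u k = (∑ k, iW h A k) - 1) := by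
  obtain ⟨part1, part2, part3⟩ := S6data h A G u hu
  have hclasses : (∑ i, iP h A i) + (∑ k, iW h A k) + (∑ k, iD h A k) = 2*h := by
    have e1 : ∀ k ∈ Finset.univ, (1:ℤ) = iP h A k + iW h A k + iD h A k :=
      fun k _ => (class_sum h A G k).symm
    have e2 : ∑ _k : Fin N, (1:ℤ) = 2*h := by
      simp [Finset.sum_const, Finset.card_univ]; rw [G.hN]
    rw [← Finset.sum_add_distrib, ← Finset.sum_add_distrib, ← Finset.sum_congr rfl e1, e2]
  have he0 : 0 ≤ ∑ k, iP h A k * A u k := by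
    apply Finset.sum_nonneg
    intro k _
    rcases iP01 h A k with hh | hh <;> rcases G.hA u k with h2 | h2 <;> simp [hh, h2]
  have heS : (∑ k, iP h A k * A u k) = 0 ∧
      (∑ k, iW h A k * A u k) = (∑ k, iW h A k) - 1 := by
    constructor <;> omega
  have hnoP : ∀ k, rsum A k = h → A u k = 0 := by
    intro k hk
    have hz : ∀ l ∈ Finset.univ, 0 ≤ iP h A l * A u l := by
      intro l _
      rcases iP01 h A l with hh | hh <;> rcases G.hA u l with h2 | h2 <;> simp [hh, h2]
    have := (Finset.sum_eq_zero_iff_of_nonneg hz).1 heS.1 k (Finset.mem_univ k)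
    rw [iP_eq_one h A k hk] at this
    linarith
  have hcov : ∀ j, (A * A) u j = 1 := by
    have hWu : ∑ k, A u k * rsum A k = 2*h := by
      rw [part3, heS.2]; ring
    have hWsum : ∑ j, (A * A) u j = 2*h := by rw [← W_eq, hWu]
    intro j
    have hz : ∑ j, (1 - (A * A) u j) = 0 := by
      rw [Finset.sum_sub_distrib, hWsum]
      simp [Finset.sum_const, Finset.card_univ]
      rw [G.hN]; ring
    have hnn : ∀ l ∈ Finset.univ, 0 ≤ 1 - (A * A) u l := by
      intro l _
      rcases G.hA2 u l with hh | hh <;> omega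
    have := (Finset.sum_eq_zero_iff_of_nonneg hnn).1 hz j (Finset.mem_univ j)
    linarith
  exact ⟨hcov, hnoP, heS.2⟩

/-- the in-degree of a max row is at most 2 when p = h-1 -/
lemma covC2 (hp : ∑ i, iP h A i = h - 1) (u : Fin N) (hu : rsum A u = h) :
    csum A u ≤ 2 := by
  obtain ⟨u₀, hu₀⟩ := G.hrex
  obtain ⟨_, hnoP₀, hs₀⟩ := covP h A G hp u₀ hu₀
  have hsplit : csum A u = ∑ k, A u₀ k * A k u + ∑ k, (1 - A u₀ k) * A k u := by
    rw [csum, ← Finset.sum_add_distrib]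
    apply Finset.sum_congr rfl
    intro k _; ring
  have h1 : ∑ k, A u₀ k * A k u ≤ 1 := by
    have hq := G.hA2 u₀ u
    rw [Matrix.mul_apply] at hq
    rcases hq with hh | hh <;> omega
  have h2 : ∑ k, (1 - A u₀ k) * A k u ≤ ∑ k, (1 - A u₀ k) * iW h A k := by
    apply Finset.sum_le_sum
    intro k _
    have hcs := class_sum h A G k
    obtain ⟨bp1, bp2⟩ := iP_bd h A k
    obtain ⟨bw1, bw2⟩ := iW_bd h A k
    obtain ⟨bd1, bd2⟩ := iD_bd h A k
    rcases iD01 h A k with hd | hd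
    · rcases iW01 h A k with hw | hw
      · -- k ∈ P
        have hpk : iP h A k = 1 := by omega
        have hAk : A k u = 0 := by
          have hrk := rsum_of_iP h A hpk
          -- k ∈ P, u ∈ P so A k u = 0
          exact (covP h A G hp k hrk).2.1 u hu
        simp [hAk, hw]
      · rw [hw]
        have := entry_le_one A G.hA u₀ k
        have := entry_le_one A G.hA k u
        have := entry_nonneg A G.hA k u
        nlinarith
    · have : A u₀ k = 1 := S2 h A G u₀ hu₀ k (rsum_of_iD h A hd)
      rw [this]
      simp
  have h3 : ∑ k, (1 - A u₀ k) * iW h A k = 1 := by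
    have e1 : ∑ k, (1 - A u₀ k) * iW h A k
        = (∑ k, iW h A k) - ∑ k, iW h A k * A u₀ k := by
      rw [← Finset.sum_sub_distrib]
      apply Finset.sum_congr rfl
      intro k _; ring
    rw [e1, hs₀]; ring
  linarith

end evenstruct

lemma evenAarith (h q E R : ℤ) (h4 : 4 ≤ h) (hq : q ≤ h - 1)
    (hE0 : 0 ≤ E) (hEq : E ≤ q)
    (hR : R = q*h - ((h-1)^2 - (h - q)))
    (hbud : 2*h*q - (h*E + (h-1)*(R-E)) ≤ 2*h) : False := by
  subst hR
  nlinarith [mul_nonneg (by linarith : (0:ℤ) ≤ h - 1 - q) (by nlinarith : (0:ℤ) ≤ h^2 - 4*h + 2), sq_nonneg (h-2)]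

section evenA

variable {N : ℕ} (h : ℤ) (A : Matrix (Fin N) (Fin N) ℤ) (G : GM h A)
include G

lemma classes_total : (∑ i, iP h A i) + (∑ k, iW h A k) + (∑ k, iD h A k) = 2*h := by
  have e1 : ∀ k ∈ Finset.univ, (1:ℤ) = iP h A k + iW h A k + iD h A k :=
    fun k _ => (class_sum h A G k).symm
  have e2 : ∑ _k : Fin N, (1:ℤ) = 2*h := by
    simp [Finset.sum_const, Finset.card_univ]; rw [G.hN]
  rw [← Finset.sum_add_distrib, ← Finset.sum_add_distrib, ← Finset.sum_congr rfl e1, e2]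

/-- the budget inequality : ∑ (2h - W_k) ≤ 2h -/
lemma budget : ∑ k, (2*h - ∑ l, A k l * rsum A l) ≤ 2*h := by
  have hswap : ∑ k, ∑ l, A k l * rsum A l = ∑ l, rsum A l * csum A l := by
    rw [Finset.sum_comm]
    apply Finset.sum_congr rfl
    intro l _
    rw [csum, Finset.mul_sum]
    apply Finset.sum_congr rfl
    intro k _; ring
  have hlow := sum_rc_ge A h h G.hrle G.hcle (h^2+2*h-1) G.hsum
  rw [G.hN] at hlow
  have e2 : ∑ _k : Fin N, (2*h : ℤ) = 2*h*(2*h) := by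
    rw [Finset.sum_const, Finset.card_univ, Fintype.card_fin, nsmul_eq_mul, G.hN]
  rw [Finset.sum_sub_distrib, e2, hswap]
  nlinarith [hlow]

/-- case p = h is impossible -/
lemma evenA (hp : ∑ i, iP h A i = h) : False := by
  obtain ⟨u₀, hu₀⟩ := G.hrex
  set ek : Fin N → ℤ := fun k => ∑ l, iP h A l * A k l with hek
  set sk : Fin N → ℤ := fun k => ∑ l, iW h A l * A k l with hsk
  -- a1 : columns of D₂ vertices are exactly P
  have a1 : ∀ k, iD h A k = 1 → ∀ i, A i k = iP h A i := by
    intro k hk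
    have hrk := rsum_of_iD h A hk
    have hcol : ∑ i, iP h A i * A i k = h := by
      have e : ∀ i ∈ Finset.univ, iP h A i * A i k = iP h A i := by
        intro i _
        rcases iP01 h A i with hh | hh
        · rw [hh]; ring
        · rw [hh, S2 h A G i (rsum_of_iP h A hh) k hrk]; ring
      rw [Finset.sum_congr rfl e, hp]
    have hge : ∑ i, iP h A i * A i k ≤ ∑ i, A i k := by
      apply Finset.sum_le_sum
      intro i _
      have h1 := entry_nonneg A G.hA i k
      obtain ⟨b1, b2⟩ := iP_bd h A i
      nlinarith
    have hcA : ∑ i, A i k = h := le_antisymm (G.hcle k) (by rw [← hcol]; exact hge)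
    have hzero : ∑ i, (A i k - iP h A i * A i k) = 0 := by
      rw [Finset.sum_sub_distrib, hcol, hcA]; ring
    have hnn : ∀ i ∈ Finset.univ, 0 ≤ A i k - iP h A i * A i k := by
      intro i _
      have h1 := entry_nonneg A G.hA i k
      obtain ⟨b1, b2⟩ := iP_bd h A i
      nlinarith
    intro i
    have hz := (Finset.sum_eq_zero_iff_of_nonneg hnn).1 hzero i (Finset.mem_univ i)
    rcases iP01 h A i with hh | hh
    · rw [hh]; rw [hh] at hz; linarith
    · rw [hh]; exact S2 h A G i (rsum_of_iP h A hh) k hrk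
  -- rsum decomposition on D₂
  have arsum : ∀ k, iD h A k = 1 → rsum A k = ek k + sk k := by
    intro k hk
    have hkP : iP h A k = 0 := by
      obtain ⟨b1, b2⟩ := iP_bd h A k
      obtain ⟨c1, c2⟩ := iW_bd h A k
      have := class_sum h A G k
      omega
    have e1 : ∀ l ∈ Finset.univ, A k l = iP h A l * A k l + iW h A l * A k l
        + iD h A l * A k l := by
      intro l _
      have h₁ := class_sum h A G l
      linear_combination (-(A k l)) * h₁
    have e2 : ∀ l ∈ Finset.univ, iD h A l * A k l = 0 := by
      intro l _
      rcases iD01 h A l with hh | hh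
      · rw [hh]; ring
      · rw [a1 l hh k, hkP]; ring
    calc rsum A k = ∑ l, A k l := rfl
      _ = ∑ l, (iP h A l * A k l + iW h A l * A k l + iD h A l * A k l) :=
          Finset.sum_congr rfl e1
      _ = ∑ l, (iP h A l * A k l + iW h A l * A k l) + ∑ l, iD h A l * A k l := by
          rw [← Finset.sum_add_distrib]
      _ = ∑ l, (iP h A l * A k l + iW h A l * A k l) := by
          rw [Finset.sum_eq_zero e2]; ring
      _ = ek k + sk k := by rw [hek, hsk, ← Finset.sum_add_distrib]
  -- W decomposition on D₂
  have aW : ∀ k, iD h A k = 1 →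
      ∑ l, A k l * rsum A l = h * ek k + (h-1) * sk k := by
    intro k hk
    have hkP : iP h A k = 0 := by
      obtain ⟨b1, b2⟩ := iP_bd h A k
      obtain ⟨c1, c2⟩ := iW_bd h A k
      have := class_sum h A G k
      omega
    have e1 : ∀ l ∈ Finset.univ, A k l * rsum A l
        = h * (iP h A l * A k l) + (h-1) * (iW h A l * A k l) := by
      intro l _
      obtain ⟨b1, b2⟩ := iP_bd h A l
      obtain ⟨c1, c2⟩ := iW_bd h A l
      obtain ⟨d1, d2⟩ := iD_bd h A l
      have hcs := class_sum h A G l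
      rcases iD01 h A l with hh | hh
      · rcases iW01 h A l with hw | hw
        · have hpl : iP h A l = 1 := by omega
          have := rsum_of_iP h A hpl
          rw [this, hw, hpl]; ring
        · have hpl : iP h A l = 0 := by omega
          have := rsum_of_iW h A hw
          rw [this, hw, hpl]; ring
      · have hAkl : A k l = 0 := by rw [a1 l hh k, hkP]
        have hw : iW h A l = 0 := by omega
        have hpl : iP h A l = 0 := by omega
        rw [hAkl, hw, hpl]; ring
    calc ∑ l, A k l * rsum A l
        = ∑ l, (h * (iP h A l * A k l) + (h-1) * (iW h A l * A k l)) :=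
          Finset.sum_congr rfl e1
      _ = h * ek k + (h-1) * sk k := by
          rw [Finset.sum_add_distrib, ← Finset.mul_sum, ← Finset.mul_sum, hek, hsk]
  -- bounds on ek, sk
  have hek1 : ∀ k, ek k ≤ 1 := fun k => S4 h A G k
  have hek0 : ∀ k, 0 ≤ ek k := by
    intro k
    apply Finset.sum_nonneg
    intro l _
    rcases iP01 h A l with hh | hh <;> rcases G.hA k l with h2 | h2 <;> simp [hh, h2]
  have hsk_le : ∀ k, sk k ≤ ∑ l, iW h A l := by
    intro k
    apply Finset.sum_le_sum
    intro l _
    rcases iW01 h A l with hh | hh <;> rcases G.hA k l with h2 | h2 <;> simp [hh, h2]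
  -- abbreviations
  set q : ℤ := ∑ k, iD h A k with hq
  set w1 : ℤ := ∑ k, iW h A k with hw1
  set E : ℤ := ∑ k, iD h A k * ek k with hE
  set R : ℤ := ∑ k, iD h A k * rsum A k with hR
  have hw1q : w1 = h - q := by
    have := classes_total h A G
    omega
  have hRval : R = q*h - ((h-1)^2 - w1) := by
    have e1 : ∀ k ∈ Finset.univ, iD h A k * rsum A k
        = h * iD h A k - iD h A k * (h - rsum A k) := fun k _ => by ring
    rw [hR, Finset.sum_congr rfl e1, Finset.sum_sub_distrib, ← Finset.mul_sum,
      deficit_D h A G, ← hq, ← hw1]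
    ring
  have hq_le : q ≤ h := by
    have h1 : q ≤ ∑ k, A u₀ k := by
      rw [hq]
      apply Finset.sum_le_sum
      intro k _
      rcases iD01 h A k with hh | hh
      · rw [hh]; exact entry_nonneg A G.hA u₀ k
      · rw [hh, S2 h A G u₀ hu₀ k (rsum_of_iD h A hh)]
    have h2 : ∑ k, A u₀ k = h := hu₀
    linarith
  have hE0 : 0 ≤ E := by
    rw [hE]
    apply Finset.sum_nonneg
    intro k _
    rcases iD01 h A k with hh | hh
    · rw [hh]; ring_nf; rfl
    · rw [hh]; simpa using hek0 k
  have hEq : E ≤ q := by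
    rw [hE, hq]
    apply Finset.sum_le_sum
    intro k _
    rcases iD01 h A k with hh | hh
    · rw [hh]; ring_nf; rfl
    · rw [hh]; simpa using hek1 k
  -- q ≤ h - 1
  have hqh1 : q ≤ h - 1 := by
    have hRle : R ≤ q * (1 + w1) := by
      have e1 : R ≤ ∑ k, iD h A k * (1 + w1) := by
        rw [hR]
        apply Finset.sum_le_sum
        intro k _
        rcases iD01 h A k with hh | hh
        · rw [hh]; ring_nf; rfl
        · rw [hh]
          have := arsum k hh
          have := hek1 k
          have := hsk_le k
          rw [← hw1] at *
          nlinarith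
      rw [← Finset.sum_mul] at e1
      rw [hq]
      linarith [e1]
    by_contra hcon
    have hqeq : q = h := by omega
    rw [hqeq] at hRle hRval
    rw [hw1q, hqeq] at hRval
    rw [hw1q, hqeq] at hRle
    have := G.h4
    nlinarith
  -- budget restricted to D₂
  have hWk_le : ∀ k, ∑ l, A k l * rsum A l ≤ 2*h := by
    intro k
    have := W_le A G.hA2 k
    rw [G.hN] at this
    exact this
  have hDbud : ∑ k, iD h A k * (2*h - ∑ l, A k l * rsum A l) ≤ 2*h := by
    have e1 : ∑ k, iD h A k * (2*h - ∑ l, A k l * rsum A l)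
        ≤ ∑ k, (2*h - ∑ l, A k l * rsum A l) := by
      apply Finset.sum_le_sum
      intro k _
      obtain ⟨d1, d2⟩ := iD_bd h A k
      have := hWk_le k
      nlinarith
    exact le_trans e1 (budget h A G)
  have hexp : ∑ k, iD h A k * (2*h - ∑ l, A k l * rsum A l)
      = 2*h*q - (h * E + (h-1) * (R - E)) := by
    have e0 : ∑ k, iD h A k * (2*h - ∑ l, A k l * rsum A l)
        = 2*h*q - ∑ k, iD h A k * (∑ l, A k l * rsum A l) := by
      have ept : ∀ k ∈ Finset.univ, iD h A k * (2*h - ∑ l, A k l * rsum A l)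
          = 2*h * iD h A k - iD h A k * (∑ l, A k l * rsum A l) := fun k _ => by ring
      calc ∑ k, iD h A k * (2*h - ∑ l, A k l * rsum A l)
          = ∑ k, (2*h * iD h A k - iD h A k * (∑ l, A k l * rsum A l)) :=
            Finset.sum_congr rfl ept
        _ = ∑ k, 2*h * iD h A k - ∑ k, iD h A k * (∑ l, A k l * rsum A l) :=
            Finset.sum_sub_distrib _ _
        _ = 2*h*q - ∑ k, iD h A k * (∑ l, A k l * rsum A l) := by
            rw [← Finset.mul_sum, ← hq]
    have e1 : ∑ k, iD h A k * (∑ l, A k l * rsum A l)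
        = h * E + (h-1) * (R - E) := by
      have ept : ∀ k ∈ Finset.univ, iD h A k * (∑ l, A k l * rsum A l)
          = h * (iD h A k * ek k) + (h-1) * (iD h A k * rsum A k - iD h A k * ek k) := by
        intro k _
        rcases iD01 h A k with hh | hh
        · rw [hh]; ring
        · rw [hh, aW k hh, arsum k hh]; ring
      calc ∑ k, iD h A k * (∑ l, A k l * rsum A l)
          = ∑ k, (h * (iD h A k * ek k)
              + (h-1) * (iD h A k * rsum A k - iD h A k * ek k)) :=
            Finset.sum_congr rfl ept
        _ = h * (∑ k, iD h A k * ek k)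
              + (h-1) * (∑ k, (iD h A k * rsum A k - iD h A k * ek k)) := by
            rw [Finset.sum_add_distrib, ← Finset.mul_sum, ← Finset.mul_sum]
        _ = h * E + (h-1) * (R - E) := by
            rw [Finset.sum_sub_distrib, ← hE, ← hR]
    rw [e0, e1]
  rw [hexp] at hDbud
  exact evenAarith h q E R G.h4 hqh1 hE0 hEq (by rw [hRval, hw1q]) hDbud

end evenA

section evenB

variable {N : ℕ}

/-- indicator of columns with sum `h` -/
def iQ (h : ℤ) (A : Matrix (Fin N) (Fin N) ℤ) (j : Fin N) : ℤ := if csum A j = h then 1 else 0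

lemma iQ01 (h : ℤ) (A : Matrix (Fin N) (Fin N) ℤ) (k : Fin N) :
    iQ h A k = 0 ∨ iQ h A k = 1 := by unfold iQ; split_ifs <;> simp

lemma iQ_bd (h : ℤ) (A : Matrix (Fin N) (Fin N) ℤ) (k : Fin N) :
    0 ≤ iQ h A k ∧ iQ h A k ≤ 1 := by unfold iQ; split_ifs <;> norm_num

lemma csum_of_iQ (h : ℤ) (A : Matrix (Fin N) (Fin N) ℤ) {k : Fin N} (hk : iQ h A k = 1) :
    csum A k = h := by
  by_contra hc; simp [iQ, hc] at hk

lemma iQ_eq_iP_transpose (h : ℤ) (A : Matrix (Fin N) (Fin N) ℤ) (j : Fin N) :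
    iQ h A j = iP h A.transpose j := by
  unfold iQ iP
  rw [csum_eq_rsum_transpose]

variable (h : ℤ) (A : Matrix (Fin N) (Fin N) ℤ) (G : GM h A)
include G

/-- column deficit total -/
lemma cdeficit_total : ∑ j, (h - csum A j) = (h-1)^2 := by
  rw [Finset.sum_sub_distrib]
  have h1 : ∑ j : Fin N, csum A j = h^2 + 2*h - 1 := by
    rw [← G.hsum]
    exact Finset.sum_comm
  rw [h1]
  simp [Finset.sum_const, Finset.card_univ]
  rw [G.hN]; ring

set_option maxHeartbeats 2000000 in
lemma evenB (hp : ∑ i, iP h A i = h - 1)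
    (hpT : ∑ j, iQ h A j = h - 1)
    (hrQ : ∀ x, csum A x = h → rsum A x ≤ 2) : False := by
  have h4 := G.h4
  obtain ⟨u₀, hu₀⟩ := G.hrex
  -- facts from covP
  have cov : ∀ u, rsum A u = h → (∀ j, (A * A) u j = 1) := fun u hu => (covP h A G hp u hu).1
  have noPP : ∀ u, rsum A u = h → ∀ k, rsum A k = h → A u k = 0 :=
    fun u hu => (covP h A G hp u hu).2.1
  have sfact0 : ∀ u, rsum A u = h → ∑ k, iW h A k * A u k = (∑ k, iW h A k) - 1 :=
    fun u hu => (covP h A G hp u hu).2.2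
  -- ee j = number of arcs from j into P
  set ee : Fin N → ℤ := fun j => ∑ u, iP h A u * A j u with hee
  have c1 : ∀ j, ee j ≤ 1 - iP h A j := by
    intro j
    rcases iP01 h A j with hh | hh
    · rw [hh]
      simpa using S4 h A G j
    · rw [hh]
      have : ee j = 0 := by
        rw [hee]
        apply Finset.sum_eq_zero
        intro u _
        rcases iP01 h A u with h2 | h2
        · rw [h2]; ring
        · rw [h2, noPP j (rsum_of_iP h A hh) u (rsum_of_iP h A h2)]; ring
      omega
  have c1' : ∀ j, 0 ≤ ee j := by
    intro j
    apply Finset.sum_nonneg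
    intro u _
    rcases iP01 h A u with h2 | h2 <;> rcases G.hA j u with h3 | h3 <;> simp [h2, h3]
  have c2 : ∑ j, ee j = ∑ u, iP h A u * csum A u := by
    rw [hee]
    rw [Finset.sum_comm]
    apply Finset.sum_congr rfl
    intro u _
    rw [csum, Finset.mul_sum]
  set T : ℤ := ∑ u, iP h A u * csum A u with hT
  have c3 : T ≤ h + 1 := by
    have e1 : ∑ j, ee j ≤ ∑ j, (1 - iP h A j) := Finset.sum_le_sum fun j _ => c1 j
    rw [c2] at e1
    have e2 : ∑ j, (1 - iP h A j) = h + 1 := by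
      rw [Finset.sum_sub_distrib, hp]
      rw [Finset.sum_const, Finset.card_univ, Fintype.card_fin, nsmul_eq_mul, mul_one, G.hN]
      ring
    rw [e2] at e1
    rw [hT]
    exact e1
  have c4 : ∑ j, (1 - iP h A j) * (h - csum A j) = T - (h-1) := by
    have e1 : ∑ j, (1 - iP h A j) * (h - csum A j)
        = ∑ j, (h - csum A j) - ∑ j, iP h A j * (h - csum A j) := by
      rw [← Finset.sum_sub_distrib]
      apply Finset.sum_congr rfl
      intro j _; ring
    have e2 : ∑ j, iP h A j * (h - csum A j) = h * (h-1) - T := by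
      have e3 : ∀ j ∈ Finset.univ, iP h A j * (h - csum A j)
          = h * iP h A j - iP h A j * csum A j := fun j _ => by ring
      rw [Finset.sum_congr rfl e3, Finset.sum_sub_distrib, ← Finset.mul_sum, hp, hT]
    rw [e1, e2, cdeficit_total h A G]
    ring
  set PQ : ℤ := ∑ j, iP h A j * iQ h A j with hPQ
  have c6 : ∑ j, (1 - iP h A j) * (1 - iQ h A j) = 2 + PQ := by
    have e1 : ∀ j ∈ Finset.univ, (1 - iP h A j) * (1 - iQ h A j)
        = 1 - iP h A j - iQ h A j + iP h A j * iQ h A j := fun j _ => by ring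
    rw [Finset.sum_congr rfl e1]
    rw [Finset.sum_add_distrib, Finset.sum_sub_distrib, Finset.sum_sub_distrib, hp, hpT]
    rw [Finset.sum_const, Finset.card_univ, Fintype.card_fin, nsmul_eq_mul, mul_one, ← hPQ]
    have : ((N:ℤ)) = 2*h := G.hN
    rw [this]
    ring
  have c5 : ∀ j ∈ Finset.univ, (1 - iP h A j) * (1 - iQ h A j)
      ≤ (1 - iP h A j) * (h - csum A j) := by
    intro j _
    obtain ⟨b1, b2⟩ := iP_bd h A j
    obtain ⟨q1, q2⟩ := iQ_bd h A j
    have hc := G.hcle j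
    rcases iQ01 h A j with hh | hh
    · have : csum A j ≤ h - 1 := by
        by_contra hcon
        have : csum A j = h := by omega
        simp [iQ, this] at hh
      nlinarith
    · rw [hh]
      have := csum_of_iQ h A hh
      nlinarith
  have hPQ0 : 0 ≤ PQ := by
    rw [hPQ]
    apply Finset.sum_nonneg
    intro j _
    obtain ⟨b1, _⟩ := iP_bd h A j
    obtain ⟨q1, _⟩ := iQ_bd h A j
    nlinarith
  have hchain : 2 + PQ ≤ T - (h-1) := by
    rw [← c6, ← c4]
    exact Finset.sum_le_sum c5
  have hTval : T = h + 1 := by omega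
  have hPQz : PQ = 0 := by omega
  -- pointwise equality in c5
  have CKEY : ∀ j, iP h A j = 0 → iQ h A j = 0 → csum A j = h - 1 := by
    intro j hPj hQj
    have hz : ∑ j, ((1 - iP h A j) * (h - csum A j) - (1 - iP h A j) * (1 - iQ h A j)) = 0 := by
      rw [Finset.sum_sub_distrib, c4, c6, hTval, hPQz]
      ring
    have hnn : ∀ j ∈ Finset.univ,
        0 ≤ (1 - iP h A j) * (h - csum A j) - (1 - iP h A j) * (1 - iQ h A j) := by
      intro j hj
      have := c5 j hj
      linarith
    have := (Finset.sum_eq_zero_iff_of_nonneg hnn).1 hz j (Finset.mem_univ j)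
    rw [hPj, hQj] at this
    linarith
  -- every non-P vertex has exactly one arc into P, hence positive rsum
  have EE : ∀ j, iP h A j = 0 → 1 ≤ rsum A j := by
    intro j hPj
    have hz : ∑ j, ((1 - iP h A j) - ee j) = 0 := by
      rw [Finset.sum_sub_distrib, c2, hTval]
      rw [Finset.sum_sub_distrib]
      rw [Finset.sum_const, Finset.card_univ, Fintype.card_fin, nsmul_eq_mul, mul_one, hp, G.hN]
      ring
    have hnn : ∀ j ∈ Finset.univ, 0 ≤ (1 - iP h A j) - ee j := by
      intro j _
      have := c1 j
      linarith
    have heq := (Finset.sum_eq_zero_iff_of_nonneg hnn).1 hz j (Finset.mem_univ j)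
    have heej : ee j = 1 := by rw [hPj] at heq; linarith
    have : ee j ≤ rsum A j := by
      rw [hee, rsum]
      apply Finset.sum_le_sum
      intro u _
      obtain ⟨b1, b2⟩ := iP_bd h A u
      have := entry_nonneg A G.hA j u
      nlinarith
    linarith
  -- Q ⊆ D₂
  have iQle : ∀ j, iQ h A j ≤ iD h A j := by
    intro j
    rcases iQ01 h A j with hh | hh
    · rw [hh]; exact (iD_bd h A j).1
    · rw [hh]
      have h1 := hrQ j (csum_of_iQ h A hh)
      have h2 : rsum A j ≤ h - 2 := by omega
      unfold iD
      rw [if_pos h2]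
  set q : ℤ := ∑ k, iD h A k with hq
  set w1 : ℤ := ∑ k, iW h A k with hw1
  have hq_ge : h - 1 ≤ q := by
    have : ∑ j, iQ h A j ≤ ∑ j, iD h A j := Finset.sum_le_sum fun j _ => iQle j
    rw [hpT] at this
    rw [hq]
    exact this
  have hq_le : q ≤ h := by
    have h1 : q ≤ ∑ k, A u₀ k := by
      rw [hq]
      apply Finset.sum_le_sum
      intro k _
      rcases iD01 h A k with hh | hh
      · rw [hh]; exact entry_nonneg A G.hA u₀ k
      · rw [hh, S2 h A G u₀ hu₀ k (rsum_of_iD h A hh)]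
    have h2 : ∑ k, A u₀ k = h := hu₀
    linarith
  have hclasses := classes_total h A G
  have hw1val : w1 = h + 1 - q := by
    rw [hw1, hq] at *
    omega
  -- case split on q
  rcases (by omega : q = h ∨ q = h - 1) with hqv | hqv
  · -- q = h : w1 = 1
    have hw11 : w1 = 1 := by omega
    have NA : ∀ u, rsum A u = h → ∀ k, A u k = iD h A k := by
      intro u hu
      have hcol : ∑ k, iD h A k * A u k = h := by
        have e : ∀ k ∈ Finset.univ, iD h A k * A u k = iD h A k := by
          intro k _
          rcases iD01 h A k with hh | hh
          · rw [hh]; ring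
          · rw [hh, S2 h A G u hu k (rsum_of_iD h A hh)]; ring
        rw [Finset.sum_congr rfl e, ← hq, hqv]
      have hzero : ∑ k, (A u k - iD h A k * A u k) = 0 := by
        rw [Finset.sum_sub_distrib, hcol]
        have : ∑ k, A u k = h := hu
        rw [this]
        ring
      have hnn : ∀ k ∈ Finset.univ, 0 ≤ A u k - iD h A k * A u k := by
        intro k _
        obtain ⟨d1, d2⟩ := iD_bd h A k
        have := entry_nonneg A G.hA u k
        nlinarith
      intro k
      have hz := (Finset.sum_eq_zero_iff_of_nonneg hnn).1 hzero k (Finset.mem_univ k)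
      rcases iD01 h A k with hh | hh
      · rw [hh]; rw [hh] at hz; linarith
      · rw [hh]; exact S2 h A G u hu k (rsum_of_iD h A hh)
    obtain ⟨z, _, hz1, hz0⟩ := sum_eq_one_extract
      (f := iW h A) (s := Finset.univ) (fun k _ => iW01 h A k) (by rw [← hw1, hw11])
    have hiDz : iD h A z = 0 := by
      obtain ⟨d1, d2⟩ := iD_bd h A z
      obtain ⟨p1, p2⟩ := iP_bd h A z
      have := class_sum h A G z
      omega
    have hiPz : iP h A z = 0 := by
      obtain ⟨d1, d2⟩ := iD_bd h A z
      obtain ⟨p1, p2⟩ := iP_bd h A z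
      have := class_sum h A G z
      omega
    have covz : ∑ k, A u₀ k * A k z = 1 := by
      have := cov u₀ hu₀ z
      rw [Matrix.mul_apply] at this
      exact this
    have hDz : ∑ k, iD h A k * A k z = 1 := by
      rw [← covz]
      apply Finset.sum_congr rfl
      intro k _
      rw [NA u₀ hu₀ k]
    have hcz : csum A z = 1 := by
      have e1 : ∀ k ∈ Finset.univ, A k z
          = iP h A k * A k z + iW h A k * A k z + iD h A k * A k z := by
        intro k _
        have h₁ := class_sum h A G k
        linear_combination (-(A k z)) * h₁
      have eP : ∑ k, iP h A k * A k z = 0 := by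
        apply Finset.sum_eq_zero
        intro k _
        rcases iP01 h A k with hh | hh
        · rw [hh]; ring
        · rw [hh, NA k (rsum_of_iP h A hh) z, hiDz]; ring
      have eW : ∑ k, iW h A k * A k z = 0 := by
        apply Finset.sum_eq_zero
        intro k _
        by_cases hkz : k = z
        · rw [hkz, G.htr]; ring
        · rw [hz0 k (Finset.mem_univ k) hkz]; ring
      calc csum A z = ∑ k, A k z := rfl
        _ = ∑ k, (iP h A k * A k z + iW h A k * A k z + iD h A k * A k z) :=
            Finset.sum_congr rfl e1
        _ = (∑ k, iP h A k * A k z) + (∑ k, iW h A k * A k z) + ∑ k, iD h A k * A k z := by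
            rw [Finset.sum_add_distrib, Finset.sum_add_distrib]
        _ = 1 := by rw [eP, eW, hDz]; ring
    have hiQz : iQ h A z = 0 := by
      rcases iQ01 h A z with hh | hh
      · exact hh
      · have := iQle z
        rw [hh, hiDz] at this
        omega
    have := CKEY z hiPz hiQz
    omega
  · -- q = h - 1 : w1 = 2
    have hw12 : w1 = 2 := by omega
    -- extract the two W₁ vertices
    obtain ⟨z₁, hz1⟩ := exists_eq_one (fun k => iW01 h A k) (by rw [← hw1, hw12]; norm_num)
    have herase : ∑ k ∈ Finset.univ.erase z₁, iW h A k = 1 := by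
      have := Finset.sum_erase_add Finset.univ (iW h A) (Finset.mem_univ z₁)
      rw [← hw1] at this
      omega
    obtain ⟨z₂, hz₂mem, hz2, hz0⟩ := sum_eq_one_extract
      (f := iW h A) (s := Finset.univ.erase z₁)
      (fun k _ => iW01 h A k) herase
    have hne12 : z₂ ≠ z₁ := Finset.ne_of_mem_erase hz₂mem
    have hWonly : ∀ k, k ≠ z₁ → k ≠ z₂ → iW h A k = 0 := by
      intro k h1 h2
      exact hz0 k (Finset.mem_erase.2 ⟨h1, Finset.mem_univ k⟩) h2
    -- pair support sums
    have pairsum : ∀ f : Fin N → ℤ, ∑ k, iW h A k * f k = f z₁ + f z₂ := by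
      intro f
      have hsub : ∑ k ∈ ({z₁, z₂} : Finset (Fin N)), iW h A k * f k
          = ∑ k, iW h A k * f k := by
        apply Finset.sum_subset (Finset.subset_univ _)
        intro x _ hx
        simp only [Finset.mem_insert, Finset.mem_singleton] at hx
        push_neg at hx
        rw [hWonly x hx.1 hx.2]
        ring
      rw [← hsub, Finset.sum_pair (Ne.symm hne12 : z₁ ≠ z₂), hz1, hz2]
      ring
    have sfact : ∀ u, rsum A u = h → A u z₁ + A u z₂ = 1 := by
      intro u hu
      have := sfact0 u hu
      rw [pairsum] at this
      rw [hw12] at this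
      omega
    set A1 : ℤ := ∑ u, iP h A u * A u z₁ with hA1
    set A2 : ℤ := ∑ u, iP h A u * A u z₂ with hA2d
    have hA12 : A1 + A2 = h - 1 := by
      rw [hA1, hA2d, ← Finset.sum_add_distrib, ← hp]
      apply Finset.sum_congr rfl
      intro u _
      rcases iP01 h A u with hh | hh
      · rw [hh]; ring
      · rw [hh]
        have := sfact u (rsum_of_iP h A hh)
        linarith
    have hA1nn : 0 ≤ A1 := by
      rw [hA1]
      apply Finset.sum_nonneg
      intro u _
      rcases iP01 h A u with h2 | h2 <;> rcases G.hA u z₁ with h3 | h3 <;> simp [h2, h3]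
    have hA2nn : 0 ≤ A2 := by
      rw [hA2d]
      apply Finset.sum_nonneg
      intro u _
      rcases iP01 h A u with h2 | h2 <;> rcases G.hA u z₂ with h3 | h3 <;> simp [h2, h3]
    -- the star identity
    have star : ∀ u, rsum A u = h → ∀ j,
        (∑ k, iD h A k * A k j) + A u z₁ * A z₁ j + A u z₂ * A z₂ j = 1 := by
      intro u hu j
      have hcovj : ∑ k, A u k * A k j = 1 := by
        have := cov u hu j
        rw [Matrix.mul_apply] at this
        exact this
      have e1 : ∀ k ∈ Finset.univ, A u k * A k j
          = iD h A k * A k j + iW h A k * (A u k * A k j) := by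
        intro k _
        obtain ⟨p1, p2⟩ := iP_bd h A k
        obtain ⟨w1', w2'⟩ := iW_bd h A k
        obtain ⟨d1, d2⟩ := iD_bd h A k
        have hcs := class_sum h A G k
        rcases iD01 h A k with hh | hh
        · rcases iW01 h A k with hw | hw
          · have hpk : iP h A k = 1 := by omega
            have : A u k = 0 := noPP u hu k (rsum_of_iP h A hpk)
            rw [this, hh, hw]; ring
          · rw [hh, hw]; ring
        · have hw : iW h A k = 0 := by omega
          have : A u k = 1 := S2 h A G u hu k (rsum_of_iD h A hh)
          rw [this, hh, hw]; ring
      have e2 : ∑ k, iW h A k * (A u k * A k j) = A u z₁ * A z₁ j + A u z₂ * A z₂ j :=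
        pairsum (fun k => A u k * A k j)
      calc (∑ k, iD h A k * A k j) + A u z₁ * A z₁ j + A u z₂ * A z₂ j
          = (∑ k, iD h A k * A k j) + ∑ k, iW h A k * (A u k * A k j) := by rw [e2]; ring
        _ = ∑ k, (iD h A k * A k j + iW h A k * (A u k * A k j)) := by
            rw [Finset.sum_add_distrib]
        _ = ∑ k, A u k * A k j := Finset.sum_congr rfl (fun k hk => (e1 k hk).symm)
        _ = 1 := hcovj
    -- csum decomposition at any x
    have cdec : ∀ x, csum A x
        = (∑ k, iP h A k * A k x) + (A z₁ x + A z₂ x) + ∑ k, iD h A k * A k x := by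
      intro x
      have e1 : ∀ k ∈ Finset.univ, A k x
          = iP h A k * A k x + iW h A k * A k x + iD h A k * A k x := by
        intro k _
        have h₁ := class_sum h A G k
        linear_combination (-(A k x)) * h₁
      have e2 : ∑ k, iW h A k * A k x = A z₁ x + A z₂ x := pairsum (fun k => A k x)
      calc csum A x = ∑ k, A k x := rfl
        _ = ∑ k, (iP h A k * A k x + iW h A k * A k x + iD h A k * A k x) :=
            Finset.sum_congr rfl e1
        _ = (∑ k, iP h A k * A k x) + (∑ k, iW h A k * A k x)
            + ∑ k, iD h A k * A k x := by
            rw [Finset.sum_add_distrib, Finset.sum_add_distrib]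
        _ = (∑ k, iP h A k * A k x) + (A z₁ x + A z₂ x) + ∑ k, iD h A k * A k x := by
            rw [e2]
    -- z₁, z₂ have column sum h-1
    have hiz : ∀ z, iW h A z = 1 → csum A z = h - 1 := by
      intro z hz
      have hiDz : iD h A z = 0 := by
        obtain ⟨d1, d2⟩ := iD_bd h A z
        obtain ⟨p1, p2⟩ := iP_bd h A z
        have := class_sum h A G z
        omega
      have hiPz : iP h A z = 0 := by
        obtain ⟨d1, d2⟩ := iD_bd h A z
        obtain ⟨p1, p2⟩ := iP_bd h A z
        have := class_sum h A G z
        omega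
      have hiQz : iQ h A z = 0 := by
        rcases iQ01 h A z with hh | hh
        · exact hh
        · have := iQle z
          rw [hh, hiDz] at this
          omega
      exact CKEY z hiPz hiQz
    have hcz1 : csum A z₁ = h - 1 := hiz z₁ hz1
    have hcz2 : csum A z₂ = h - 1 := hiz z₂ hz2
    -- iP of P-sum arcs into P is zero pointwise helpers for extraction
    have prod01 : ∀ (u : Fin N) (z : Fin N),
        iP h A u * A u z = 0 ∨ iP h A u * A u z = 1 := by
      intro u z
      rcases iP01 h A u with h2 | h2 <;> rcases G.hA u z with h3 | h3 <;> simp [h2, h3]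
    -- main case split
    rcases (by omega : A1 = 0 ∨ 1 ≤ A1) with hA1z | hA1pos
    · -- A1 = 0 : all P-vertices point to z₂
      have hAz1 : ∀ u, iP h A u = 1 → A u z₁ = 0 := by
        intro u hu
        have hnn : ∀ v ∈ Finset.univ, 0 ≤ iP h A v * A v z₁ := by
          intro v _
          rcases prod01 v z₁ with hh | hh <;> omega
        have := (Finset.sum_eq_zero_iff_of_nonneg hnn).1 (by rw [← hA1]; exact hA1z)
          u (Finset.mem_univ u)
        rw [hu] at this
        linarith
      obtain ⟨u₁, hu₁⟩ := exists_eq_one (fun u => iP01 h A u) (by rw [hp]; omega)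
      have hru₁ := rsum_of_iP h A hu₁
      have h1 : A u₁ z₁ = 0 := hAz1 u₁ hu₁
      have h2 : A u₁ z₂ = 1 := by
        have := sfact u₁ hru₁
        omega
      have hstar := star u₁ hru₁ z₁
      rw [h1, h2, G.htr] at hstar
      -- ∑ iD * A k z₁ + 0 * A z₁ z₁ + 1 * A z₂ z₁ = 1
      have hcs1 := cdec z₁
      rw [hcz1] at hcs1
      have heP : ∑ k, iP h A k * A k z₁ = A1 := by rw [hA1]
      rw [heP, hA1z, G.htr] at hcs1
      -- h - 1 = 0 + (0 + A z₂ z₁) + ∑ iD A k z₁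
      omega
    · rcases (by omega : A2 = 0 ∨ 1 ≤ A2) with hA2z | hA2pos
      · -- A2 = 0 : symmetric
        have hAz2 : ∀ u, iP h A u = 1 → A u z₂ = 0 := by
          intro u hu
          have hnn : ∀ v ∈ Finset.univ, 0 ≤ iP h A v * A v z₂ := by
            intro v _
            rcases prod01 v z₂ with hh | hh <;> omega
          have := (Finset.sum_eq_zero_iff_of_nonneg hnn).1 (by rw [← hA2d]; exact hA2z)
            u (Finset.mem_univ u)
          rw [hu] at this
          linarith
        obtain ⟨u₁, hu₁⟩ := exists_eq_one (fun u => iP01 h A u) (by rw [hp]; omega)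
        have hru₁ := rsum_of_iP h A hu₁
        have h2' : A u₁ z₂ = 0 := hAz2 u₁ hu₁
        have h1' : A u₁ z₁ = 1 := by
          have := sfact u₁ hru₁
          omega
        have hstar := star u₁ hru₁ z₂
        rw [h1', h2', G.htr] at hstar
        have hcs2 := cdec z₂
        rw [hcz2] at hcs2
        have heP : ∑ k, iP h A k * A k z₂ = A2 := by rw [hA2d]
        rw [heP, hA2z, G.htr] at hcs2
        omega
      · -- both positive
        obtain ⟨u₁, hu₁⟩ := exists_eq_one (prod01 · z₁) (by rw [← hA1]; exact hA1pos)
        obtain ⟨u₂, hu₂⟩ := exists_eq_one (prod01 · z₂) (by rw [← hA2d]; exact hA2pos)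
        have hu₁P : iP h A u₁ = 1 ∧ A u₁ z₁ = 1 := by
          rcases iP01 h A u₁ with h2 | h2 <;> rcases G.hA u₁ z₁ with h3 | h3 <;>
            simp [h2, h3] at hu₁ ⊢
        have hu₂P : iP h A u₂ = 1 ∧ A u₂ z₂ = 1 := by
          rcases iP01 h A u₂ with h2 | h2 <;> rcases G.hA u₂ z₂ with h3 | h3 <;>
            simp [h2, h3] at hu₂ ⊢
        have hru₁ := rsum_of_iP h A hu₁P.1
        have hru₂ := rsum_of_iP h A hu₂P.1
        have hu₁z₂ : A u₁ z₂ = 0 := by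
          have := sfact u₁ hru₁
          have := hu₁P.2
          omega
        have hu₂z₁ : A u₂ z₁ = 0 := by
          have := sfact u₂ hru₂
          have := hu₂P.2
          omega
        have famEq : ∀ j, A z₁ j = A z₂ j := by
          intro j
          have s1 := star u₁ hru₁ j
          have s2 := star u₂ hru₂ j
          rw [hu₁P.2, hu₁z₂] at s1
          rw [hu₂P.2, hu₂z₁] at s2
          linarith
        have hDz1 : ∑ k, iD h A k * A k z₁ = 1 := by
          have s1 := star u₁ hru₁ z₁
          rw [hu₁P.2, hu₁z₂, G.htr] at s1
          linarith
        have hDz2 : ∑ k, iD h A k * A k z₂ = 1 := by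
          have s2 := star u₂ hru₂ z₂
          rw [hu₂P.2, hu₂z₁, G.htr] at s2
          linarith
        have hz₂z₁ : A z₂ z₁ = 0 := by
          rw [← famEq z₁, G.htr]
        have hz₁z₂ : A z₁ z₂ = 0 := by
          rw [famEq z₂, G.htr]
        have hcs1 := cdec z₁
        have hcs2 := cdec z₂
        have heP1 : ∑ k, iP h A k * A k z₁ = A1 := by rw [hA1]
        have heP2 : ∑ k, iP h A k * A k z₂ = A2 := by rw [hA2d]
        rw [hcz1, heP1, G.htr, hz₂z₁, hDz1] at hcs1
        rw [hcz2, heP2, hz₁z₂, G.htr, hDz2] at hcs2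
        -- h - 1 = A1 + (0 + 0) + 1 and same for A2
        omega

end evenB

section evenhard

lemma evenHard {N : ℕ} (h : ℤ) (A : Matrix (Fin N) (Fin N) ℤ)
    (hN : (N:ℤ) = 2*h) (h4 : 4 ≤ h)
    (hA : ∀ i j, A i j = 0 ∨ A i j = 1)
    (htr : ∀ i, A i i = 0)
    (hA2 : ∀ i j, (A * A) i j = 0 ∨ (A * A) i j = 1)
    (hsum : ∑ i, ∑ j, A i j = h^2 + 2*h - 1)
    (hrle : ∀ i, rsum A i ≤ h)
    (hcle : ∀ j, csum A j ≤ h)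
    (hrex : ∃ v, rsum A v = h)
    (hcex : ∃ w, csum A w = h) : False := by
  have G : GM h A := ⟨hN, h4, hA, htr, hA2, hsum, hrle, hcle, hrex, hcex⟩
  rcases S6 h A G with hpA | hpA
  · exact evenA h A G hpA
  · have GT := GM.transpose h A G
    rcases S6 h A.transpose GT with hpT | hpT
    · exact evenA h A.transpose GT hpT
    · have hpT' : ∑ j, iQ h A j = h - 1 := by
        rw [Finset.sum_congr rfl (fun j _ => iQ_eq_iP_transpose h A j)]
        exact hpT
      have hrQ : ∀ x, csum A x = h → rsum A x ≤ 2 := by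
        intro x hx
        have hx' : rsum A.transpose x = h := by
          rw [← csum_eq_rsum_transpose]; exact hx
        have hres := covC2 h A.transpose GT hpT x hx'
        have e : csum A.transpose x = rsum A x := by
          simp [csum, rsum, Matrix.transpose_apply]
        rw [e] at hres
        exact hres
      exact evenB h A G hpA hpT' hrQ

end evenhard

end Stmt9aux

/-- Lemma 7 (le7): if `A` is extremal (`n ≥ 8`) and its maximum row sum `d = Δ⁺` is at
least its maximum column sum `c = Δ⁻`, then `Δ⁺ = ⌈(n+1)/2⌉`. -/
theorem stmt_9 (n : ℕ) (hn : 8 ≤ n) (A : Matrix (Fin n) (Fin n) ℤ)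
    (hA : ∀ i j, A i j = 0 ∨ A i j = 1)
    (htr : ∀ i, A i i = 0)
    (hA2 : ∀ i j, (A * A) i j = 0 ∨ (A * A) i j = 1)
    (hext : ∑ i, ∑ j, A i j = (((n^2 + 4*n) / 4 : ℕ) : ℤ) - 1)
    (d c : ℤ)
    (hd : IsGreatest (Set.range fun i => ∑ j, A i j) d)
    (hc : IsGreatest (Set.range fun j => ∑ i, A i j) c)
    (hdc : c ≤ d) :
    d = (((n + 2) / 2 : ℕ) : ℤ) := by
  classical
  have hrle : ∀ i, Stmt9aux.rsum A i ≤ d := by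
    intro i
    exact hd.2 ⟨i, rfl⟩
  have hcle : ∀ j, Stmt9aux.csum A j ≤ c := by
    intro j
    exact hc.2 ⟨j, rfl⟩
  obtain ⟨v, hv⟩ := hd.1
  obtain ⟨w, hw⟩ := hc.1
  have hv : Stmt9aux.rsum A v = d := hv
  have hw : Stmt9aux.csum A w = c := hw
  -- transpose data
  have hAT : ∀ i j, A.transpose i j = 0 ∨ A.transpose i j = 1 := fun i j => hA j i
  have hsqT : A.transpose * A.transpose = (A * A).transpose := (Matrix.transpose_mul A A).symm
  have hA2T : ∀ i j, (A.transpose * A.transpose) i j = 0 ∨ (A.transpose * A.transpose) i j = 1 := by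
    intro i j; rw [hsqT]; exact hA2 j i
  have htrT : ∀ i, A.transpose i i = 0 := fun i => htr i
  have htotT : ∑ i, ∑ j, A.transpose i j = ∑ i, ∑ j, A i j := by
    simp only [Matrix.transpose_apply]; exact Finset.sum_comm
  have hrleT : ∀ i, Stmt9aux.rsum A.transpose i ≤ c := by
    intro i
    rw [← Stmt9aux.csum_eq_rsum_transpose]
    exact hcle i
  have hwT : Stmt9aux.rsum A.transpose w = c := by
    rw [← Stmt9aux.csum_eq_rsum_transpose]; exact hw
  rcases Nat.even_or_odd n with he | ho
  · -- even case
    obtain ⟨H, hH⟩ := he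
    have hH4 : 4 ≤ H := by omega
    set h : ℤ := (H : ℤ) with hh
    have hNcast : (n : ℤ) = 2 * h := by rw [hh]; push_cast; omega
    have hmnat : ((n^2 + 4*n) / 4 : ℕ) = H^2 + 2*H := by
      have h1 : n^2 + 4*n = 4*(H^2 + 2*H) := by subst hH; ring
      rw [h1]
      omega
    have htot : ∑ i, ∑ j, A i j = h^2 + 2*h - 1 := by
      rw [hext, hmnat]; push_cast; ring
    have h4 : (4:ℤ) ≤ h := by rw [hh]; exact_mod_cast hH4
    -- window for d
    have hwind := Stmt9aux.sumBound A hA hA2 d hrle v hv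
    rw [htot, hNcast] at hwind
    obtain ⟨hd2, hd1⟩ := Stmt9aux.evenWindow h d h4 hwind
    -- window for c
    have hwindc := Stmt9aux.sumBound A.transpose hAT hA2T c hrleT w hwT
    rw [htotT, htot, hNcast] at hwindc
    obtain ⟨hc2, _hc1⟩ := Stmt9aux.evenWindow h c h4 hwindc
    -- goal value
    have hgoal : (((n + 2) / 2 : ℕ) : ℤ) = h + 1 := by
      have : (n + 2)/2 = H + 1 := by omega
      rw [this, hh]; push_cast; ring
    rw [hgoal]
    by_contra hne
    have hdh : d = h - 1 ∨ d = h := by omega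
    have hcd : c = h - 1 ∨ c = h := by omega
    have hrc_ub := Stmt9aux.sum_rc_le_sq A hA2
    rw [hNcast] at hrc_ub
    rcases hcd with hcv | hcv
    · -- c = h - 1 : use quadratic kill (works for d = h-1 and d = h)
      have hrle' : ∀ i, Stmt9aux.rsum A i ≤ h := by
        intro i; have := hrle i; omega
      have hcle' : ∀ j, Stmt9aux.csum A j ≤ h - 1 := by
        intro j; have := hcle j; omega
      have hge := Stmt9aux.sum_rc_ge A h (h-1) hrle' hcle' (h^2+2*h-1) htot
      rw [hNcast] at hge
      exact Stmt9aux.killPoly1 h h4 (le_trans hge hrc_ub)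
    · -- c = h, hence d = h
      have hdv : d = h := by omega
      have hrle' : ∀ i, Stmt9aux.rsum A i ≤ h := by
        intro i; have := hrle i; omega
      have hcle' : ∀ j, Stmt9aux.csum A j ≤ h := by
        intro j; have := hcle j; omega
      exact Stmt9aux.evenHard h A hNcast h4 hA htr hA2 htot hrle' hcle'
        ⟨v, by rw [hv, hdv]⟩ ⟨w, by rw [hw, hcv]⟩
  · -- odd case
    obtain ⟨T, hT⟩ := ho
    have hT4 : 4 ≤ T := by omega
    set t : ℤ := (T : ℤ) with ht
    have hNcast : (n : ℤ) = 2 * t + 1 := by rw [ht]; push_cast; omega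
    have hmnat : ((n^2 + 4*n) / 4 : ℕ) = T^2 + 3*T + 1 := by
      have h1 : n^2 + 4*n = 4*(T^2 + 3*T + 1) + 1 := by subst hT; ring
      rw [h1]
      generalize (T^2 + 3*T + 1) = k
      omega
    have htot : ∑ i, ∑ j, A i j = t^2 + 3*t := by
      rw [hext, hmnat]; push_cast; ring
    have h4 : (4:ℤ) ≤ t := by rw [ht]; exact_mod_cast hT4
    have hwind := Stmt9aux.sumBound A hA hA2 d hrle v hv
    rw [htot, hNcast] at hwind
    obtain ⟨hd2, hd1⟩ := Stmt9aux.oddWindow t d h4 hwind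
    have hwindc := Stmt9aux.sumBound A.transpose hAT hA2T c hrleT w hwT
    rw [htotT, htot, hNcast] at hwindc
    obtain ⟨hc2, _hc1⟩ := Stmt9aux.oddWindow t c h4 hwindc
    have hgoal : (((n + 2) / 2 : ℕ) : ℤ) = t + 1 := by
      have : (n + 2)/2 = T + 1 := by omega
      rw [this, ht]; push_cast; ring
    rw [hgoal]
    by_contra hne
    have hdv : d = t := by omega
    have hcv : c = t := by omega
    have hrle' : ∀ i, Stmt9aux.rsum A i ≤ t := by intro i; have := hrle i; omega
    have hcle' : ∀ j, Stmt9aux.csum A j ≤ t := by intro j; have := hcle j; omega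
    have hrc_ub := Stmt9aux.sum_rc_le_sq A hA2
    rw [hNcast] at hrc_ub
    have hge := Stmt9aux.sum_rc_ge A t t hrle' hcle' (t^2+3*t) htot
    rw [hNcast] at hge
    have hpoly := le_trans hge hrc_ub
    by_cases hT5 : 5 ≤ t
    · exact Stmt9aux.killPoly2 t hT5 hpoly
    · -- t = 4, n = 9
      have ht4 : t = 4 := by omega
      have hn9 : n = 9 := by omega
      subst hn9
      exact Stmt9aux.nineHard A hA hA2 (by rw [htot, ht4]; norm_num)
        (by intro i; have := hrle' i; omega) (by intro j; have := hcle' j; omega)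
        ⟨v, by rw [hv, hdv, ht4]⟩
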